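/- Let n be a binomial random variable with parameters T ∈ ℕ and p ∈ (0,1], and suppose Tp ≥ 2. Then E[ (1/n)·1{n > 0} ] ≥ 1/(2Tp). -/

import Mathlib

open Finset


lemma total_mass (T : ℕ) (p : ℝ) :
    ∑ k ∈ Finset.range (T + 1), (T.choose k : ℝ) * p ^ k * (1 - p) ^ (T - k) = 1 := by
  calc ∑ k ∈ Finset.range (T + 1), (T.choose k : ℝ) * p ^ k * (1 - p) ^ (T - k)
      = (p + (1 - p)) ^ T := by
        rw [add_pow]; exact Finset.sum_congr rfl fun k _ => by ring
    _ = 1 := by norm_num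

lemma mean_eq (T : ℕ) (p : ℝ) :
    ∑ k ∈ Finset.range (T + 1),
      ((T.choose k : ℝ) * p ^ k * (1 - p) ^ (T - k)) * (k : ℝ) = (T : ℝ) * p := by
  rcases Nat.eq_zero_or_pos T with hT | hT
  · subst hT; simp
  obtain ⟨S, rfl⟩ := Nat.exists_eq_add_of_lt hT
  simp only [Nat.zero_add] at *
  rw [Finset.sum_range_succ']
  simp only [Nat.cast_zero, mul_zero, add_zero]
  have key : ∀ j ∈ Finset.range (S + 1),
      ((S + 1).choose (j + 1) : ℝ) * p ^ (j + 1) * (1 - p) ^ (S + 1 - (j + 1)) * ((j + 1 : ℕ) : ℝ)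
      = ((S + 1 : ℕ) : ℝ) * p * ((S.choose j : ℝ) * p ^ j * (1 - p) ^ (S - j)) := by
    intro j hj
    have hc' : ((S + 1 : ℕ) : ℝ) * (S.choose j : ℝ)
        = ((S + 1).choose (j + 1) : ℝ) * ((j + 1 : ℕ) : ℝ) := by
      exact_mod_cast congrArg (Nat.cast : ℕ → ℝ) (Nat.add_one_mul_choose_eq S j)
    have hsub : S + 1 - (j + 1) = S - j := by omega
    rw [hsub, pow_succ]
    push_cast at hc' ⊢
    linear_combination (-(p ^ j * p * (1 - p) ^ (S - j))) * hc'
  rw [Finset.sum_congr rfl key, ← Finset.mul_sum, total_mass S p]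
  push_cast
  ring

/-- If `n ~ Binomial(T, p)` with `Tp ≥ 2`, then `E[(1/n) · 1{n > 0}] ≥ 1/(2Tp)`.
The expectation is written out explicitly against the binomial distribution:
`P(n = k) = C(T, k) pᵏ (1-p)^{T-k}`. -/
theorem stmt17
    (T : ℕ) (p : ℝ) (hp0 : 0 < p) (hp1 : p ≤ 1)
    (hTp : 2 ≤ (T : ℝ) * p) :
    1 / (2 * (T : ℝ) * p)
      ≤ ∑ k ∈ Finset.range (T + 1),
          (T.choose k : ℝ) * p ^ k * (1 - p) ^ (T - k)
            * (if 0 < k then 1 / (k : ℝ) else 0) := by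
  set P : ℕ → ℝ := fun k => (T.choose k : ℝ) * p ^ k * (1 - p) ^ (T - k) with hPdef
  have hq0 : (0:ℝ) ≤ 1 - p := by linarith
  have hP : ∀ k, 0 ≤ P k := fun k => by positivity
  -- T ≥ 2 as a real
  have hT2 : (2:ℝ) ≤ (T:ℝ) := le_trans hTp (by nlinarith [(by positivity : (0:ℝ) ≤ (T:ℝ))])
  have hT2' : 2 ≤ T := by exact_mod_cast hT2
  -- (1 - p)^T ≤ 1/4
  have hq4 : (1 - p) ^ T ≤ 1 / 4 := by
    have h4 : (4:ℝ) ≤ (1 + p) ^ T := by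
      have hsub : ({0, 1, 2} : Finset ℕ) ⊆ Finset.range (T + 1) := by
        intro x hx; simp only [Finset.mem_insert, Finset.mem_singleton] at hx
        rcases hx with rfl | rfl | rfl <;> simp [Finset.mem_range] <;> omega
      have hpow : (1 + p) ^ T = ∑ k ∈ Finset.range (T + 1), p ^ k * (T.choose k : ℝ) := by
        have := add_pow p 1 T
        simp only [one_pow, mul_one] at this
        rw [add_comm, this]
      have hle : ∑ k ∈ ({0, 1, 2} : Finset ℕ), p ^ k * (T.choose k : ℝ)
          ≤ ∑ k ∈ Finset.range (T + 1), p ^ k * (T.choose k : ℝ) := by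
        apply Finset.sum_le_sum_of_subset_of_nonneg hsub
        intro i _ _; positivity
      have hsmall : ∑ k ∈ ({0, 1, 2} : Finset ℕ), p ^ k * (T.choose k : ℝ)
          = 1 + p * T + p ^ 2 * (T.choose 2 : ℝ) := by
        rw [Finset.sum_insert (by norm_num), Finset.sum_insert (by norm_num),
          Finset.sum_singleton]
        simp [Nat.choose_one_right]; ring
      -- cast choose 2
      have hch2 : (T.choose 2 : ℝ) * 2 = (T:ℝ) * ((T:ℝ) - 1) := by
        have hdvd : 2 ∣ T * (T - 1) := by
          rcases Nat.even_or_odd T with h | h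
          · exact Dvd.dvd.mul_right h.two_dvd _
          · exact Dvd.dvd.mul_left (Nat.Odd.sub_odd h odd_one).two_dvd _
        have : T.choose 2 * 2 = T * (T - 1) := by
          rw [Nat.choose_two_right]; exact Nat.div_mul_cancel hdvd
        have := congrArg (Nat.cast : ℕ → ℝ) this
        push_cast [Nat.cast_sub (by omega : 1 ≤ T)] at this
        linarith [this]
      have h1 : (1:ℝ) ≤ ((T:ℝ) - 1) * p := by nlinarith
      rw [hpow]
      calc (4:ℝ) ≤ 1 + p * T + p ^ 2 * (T.choose 2 : ℝ) := by nlinarith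
        _ ≤ _ := hsmall ▸ hle
    have hmul : (1 - p) ^ T * (1 + p) ^ T ≤ 1 := by
      rw [← mul_pow]
      have : (1 - p) * (1 + p) = 1 - p ^ 2 := by ring
      rw [this]
      exact pow_le_one₀ (by nlinarith) (by nlinarith)
    have hq0T : (0:ℝ) ≤ (1 - p) ^ T := by positivity
    nlinarith
  -- Cauchy-Schwarz
  set S := ∑ k ∈ Finset.range (T + 1), P k * (if 0 < k then 1 / (k : ℝ) else 0) with hS
  have hCS : (∑ k ∈ Finset.range (T + 1), (if 0 < k then P k else 0)) ^ 2
      ≤ (∑ k ∈ Finset.range (T + 1), P k * (k : ℝ)) * S := by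
    apply Finset.sum_sq_le_sum_mul_sum_of_sq_eq_mul
    · intro i _; exact mul_nonneg (hP i) (Nat.cast_nonneg i)
    · intro i _
      rcases Nat.eq_zero_or_pos i with h | h
      · simp [h]
      · have : (0:ℝ) < i := by exact_mod_cast h
        simp only [if_pos h]
        positivity
    · intro i _
      rcases Nat.eq_zero_or_pos i with h | h
      · simp [h]
      · have hi : (i:ℝ) ≠ 0 := by positivity
        simp only [if_pos h]
        field_simp
  have hmean : ∑ k ∈ Finset.range (T + 1), P k * (k : ℝ) = (T:ℝ) * p := mean_eq T p
  have hind : ∑ k ∈ Finset.range (T + 1), (if 0 < k then P k else 0) = 1 - (1 - p) ^ T := by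
    have hsplit : ∀ k, (if 0 < k then P k else 0) = P k - (if k = 0 then P k else 0) := by
      intro k; rcases Nat.eq_zero_or_pos k with h | h
      · simp [h]
      · simp [h, Nat.pos_iff_ne_zero.mp h]
    simp only [hsplit]
    rw [Finset.sum_sub_distrib, total_mass T p,
      Finset.sum_ite_eq' (Finset.range (T + 1)) 0 P]
    simp [hPdef]
  rw [hmean, hind] at hCS
  have h34 : (3/4 : ℝ) ≤ 1 - (1 - p) ^ T := by linarith
  have hsq : (3/4 : ℝ) ^ 2 ≤ (1 - (1 - p) ^ T) ^ 2 := by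
    apply pow_le_pow_left₀ (by norm_num) h34
  have hTp0 : (0:ℝ) < (T:ℝ) * p := by linarith
  rw [div_le_iff₀ (by nlinarith)]
  nlinarith [hCS, hsq]
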